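/- arXiv:2409.20460 — 2 statements merged into one kernel-verified Lean document; each statement's English description precedes it below -/
import Mathlib

section
/- For every integer k ≥ 2, with τ = 1 - (1/(k+1))^(1/k), the quantity min( (1-τ)·k/(2(k-1)), max( ((k+1)/(2k))·(1 - τ - (1-τ)^(k+1)), (3/2)·τ·ln(1/τ) - (1/2)·τ·(1-τ) ) ) is at least 0.4. -/
lemma pow5 : ∀ k : ℕ, 12 ≤ k → (k+1) * 4^k ≤ 5^k := by
  intro k hk
  induction k, hk using Nat.le_induction with
  | base => norm_num
  | succ n hn ih =>
    have h4 : 4*(n+2) ≤ 5*(n+1) := by omega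
    calc (n+1+1) * 4^(n+1) = 4*(n+2) * 4^n := by ring
      _ ≤ 5*(n+1) * 4^n := Nat.mul_le_mul_right _ h4
      _ = 5*((n+1) * 4^n) := by ring
      _ ≤ 5*5^n := Nat.mul_le_mul_left _ ih
      _ = 5^(n+1) := by ring

lemma log_ge (τ c : ℝ) (n : ℕ) (hn : 0 < n) (hτ : 0 < τ) (hc : 0 ≤ c)
    (hcn : c / n ≤ 1) (h : τ ≤ (1 - c/(n:ℝ))^n) : c ≤ Real.log (1/τ) := by
  have hn' : (n:ℝ) ≠ 0 := by positivity
  have h1 : (1 - c/(n:ℝ)) ≤ Real.exp (-(c/(n:ℝ))) := by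
    have := Real.add_one_le_exp (-(c/(n:ℝ))); linarith
  have h2 : (1 - c/(n:ℝ))^n ≤ Real.exp (-(c/(n:ℝ)))^n :=
    pow_le_pow_left₀ (by linarith) h1 n
  have h3 : Real.exp (-(c/(n:ℝ)))^n = Real.exp (-c) := by
    rw [← Real.exp_nat_mul]
    congr 1
    field_simp
  have h4 : τ ≤ Real.exp (-c) := le_trans h (h3 ▸ h2)
  have h5 : Real.log τ ≤ -c := (Real.log_le_iff_le_exp hτ).mpr h4
  rw [one_div, Real.log_inv]
  linarith
set_option maxHeartbeats 4000000 in
theorem stmt_0 (k : ℕ) (hk : 2 ≤ k)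
    (τ : ℝ) (hτ : τ = 1 - ((1:ℝ)/((k:ℝ)+1)) ^ ((1:ℝ)/(k:ℝ))) :
    min ((1-τ)*(k:ℝ)/(2*((k:ℝ)-1)))
      (max (((k:ℝ)+1)/(2*(k:ℝ)) * (1 - τ - (1-τ)^(k+1)))
        ((3/2)*τ*Real.log (1/τ) - (1/2)*τ*(1-τ))) ≥ 0.4 := by
  have hkR : (2:ℝ) ≤ (k:ℝ) := by exact_mod_cast hk
  have hkne : (k:ℝ) ≠ 0 := by positivity
  set x : ℝ := ((1:ℝ)/((k:ℝ)+1)) ^ ((1:ℝ)/(k:ℝ)) with hxdef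
  have hb0 : (0:ℝ) < 1/((k:ℝ)+1) := by positivity
  have hx0 : 0 < x := Real.rpow_pos_of_pos hb0 _
  have hxpow : x ^ k = 1/((k:ℝ)+1) := by
    rw [hxdef, ← Real.rpow_natCast (((1:ℝ)/((k:ℝ)+1)) ^ ((1:ℝ)/(k:ℝ))) k,
        ← Real.rpow_mul hb0.le, one_div_mul_cancel hkne, Real.rpow_one]
  have h1τ : 1 - τ = x := by rw [hτ]; ring
  rcases le_or_gt 12 k with h12 | h12
  · -- large k branch
    have key : ((k:ℝ)+1) * 4^k ≤ 5^k := by exact_mod_cast pow5 k h12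
    have hx45 : (4/5:ℝ) ≤ x := by
      refine le_of_pow_le_pow_left₀ (n := k) (by omega) hx0.le ?_
      rw [hxpow, div_pow, div_le_div_iff₀ (by positivity) (by positivity)]
      nlinarith [pow_pos (show (0:ℝ) < 4 by norm_num) k]
    have hxk1 : x^(k+1) = x/((k:ℝ)+1) := by rw [pow_succ, hxpow]; ring
    refine le_min ?_ (le_trans ?_ (le_max_left _ _))
    · rw [h1τ, le_div_iff₀ (by linarith)]
      nlinarith
    · rw [h1τ, hxk1]
      have heq : ((k:ℝ)+1)/(2*(k:ℝ)) * (x - x/((k:ℝ)+1)) = x/2 := by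
        field_simp; ring
      rw [heq]; linarith
  · interval_cases k
    · -- k = 2
      have hxlo : (5773/10000 : ℝ) ≤ x := by
        refine le_of_pow_le_pow_left₀ (n := 2) (by norm_num) hx0.le ?_
        rw [hxpow]; norm_num
      have hxhi : x ≤ (2887/5000 : ℝ) := by
        refine le_of_pow_le_pow_left₀ (n := 2) (by norm_num) (by norm_num) ?_
        rw [hxpow]; norm_num
      have hτ0 : (0:ℝ) < τ := by rw [hτ]; push_cast; nlinarith
      have hτlo : (2113/5000 : ℝ) ≤ τ := by rw [hτ]; push_cast; nlinarith
      have hτhi : τ ≤ (4227/10000 : ℝ) := by rw [hτ]; push_cast; nlinarith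
      have hlog : (859/1000 : ℝ) ≤ Real.log (1/τ) := by
        refine log_ge τ (859/1000 : ℝ) 300 (by norm_num) hτ0 (by norm_num) (by norm_num) ?_
        refine le_trans hτhi ?_
        rw [show (300:ℕ) = 3*100 by rfl, pow_mul]; norm_num
      refine le_min ?_ (le_trans ?_ (le_max_right _ _))
      · rw [h1τ]; push_cast; nlinarith
      · have h1 : (2113/5000 : ℝ) * (859/1000 : ℝ) ≤ τ * Real.log (1/τ) :=
          mul_le_mul hτlo hlog (by norm_num) hτ0.le
        have h2 : (2113/5000 : ℝ) * (2113/5000 : ℝ) ≤ τ * τ :=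
          mul_le_mul hτlo hτlo (by norm_num) hτ0.le
        nlinarith [h1, h2, hτhi]
    · -- k = 3
      have hxlo : (6299/10000 : ℝ) ≤ x := by
        refine le_of_pow_le_pow_left₀ (n := 3) (by norm_num) hx0.le ?_
        rw [hxpow]; norm_num
      have hxhi : x ≤ (63/100 : ℝ) := by
        refine le_of_pow_le_pow_left₀ (n := 3) (by norm_num) (by norm_num) ?_
        rw [hxpow]; norm_num
      have hτ0 : (0:ℝ) < τ := by rw [hτ]; push_cast; nlinarith
      have hτlo : (37/100 : ℝ) ≤ τ := by rw [hτ]; push_cast; nlinarith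
      have hτhi : τ ≤ (3701/10000 : ℝ) := by rw [hτ]; push_cast; nlinarith
      have hlog : (124/125 : ℝ) ≤ Real.log (1/τ) := by
        refine log_ge τ (124/125 : ℝ) 300 (by norm_num) hτ0 (by norm_num) (by norm_num) ?_
        refine le_trans hτhi ?_
        rw [show (300:ℕ) = 3*100 by rfl, pow_mul]; norm_num
      refine le_min ?_ (le_trans ?_ (le_max_right _ _))
      · rw [h1τ]; push_cast; nlinarith
      · have h1 : (37/100 : ℝ) * (124/125 : ℝ) ≤ τ * Real.log (1/τ) :=
          mul_le_mul hτlo hlog (by norm_num) hτ0.le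
        have h2 : (37/100 : ℝ) * (37/100 : ℝ) ≤ τ * τ :=
          mul_le_mul hτlo hτlo (by norm_num) hτ0.le
        nlinarith [h1, h2, hτhi]
    · -- k = 4
      have hxlo : (6687/10000 : ℝ) ≤ x := by
        refine le_of_pow_le_pow_left₀ (n := 4) (by norm_num) hx0.le ?_
        rw [hxpow]; norm_num
      have hxhi : x ≤ (418/625 : ℝ) := by
        refine le_of_pow_le_pow_left₀ (n := 4) (by norm_num) (by norm_num) ?_
        rw [hxpow]; norm_num
      have hτ0 : (0:ℝ) < τ := by rw [hτ]; push_cast; nlinarith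
      have hτlo : (207/625 : ℝ) ≤ τ := by rw [hτ]; push_cast; nlinarith
      have hτhi : τ ≤ (3313/10000 : ℝ) := by rw [hτ]; push_cast; nlinarith
      have hlog : (551/500 : ℝ) ≤ Real.log (1/τ) := by
        refine log_ge τ (551/500 : ℝ) 300 (by norm_num) hτ0 (by norm_num) (by norm_num) ?_
        refine le_trans hτhi ?_
        rw [show (300:ℕ) = 3*100 by rfl, pow_mul]; norm_num
      refine le_min ?_ (le_trans ?_ (le_max_right _ _))
      · rw [h1τ]; push_cast; nlinarith
      · have h1 : (207/625 : ℝ) * (551/500 : ℝ) ≤ τ * Real.log (1/τ) :=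
          mul_le_mul hτlo hlog (by norm_num) hτ0.le
        have h2 : (207/625 : ℝ) * (207/625 : ℝ) ≤ τ * τ :=
          mul_le_mul hτlo hτlo (by norm_num) hτ0.le
        nlinarith [h1, h2, hτhi]
    · -- k = 5
      have hxlo : (1747/2500 : ℝ) ≤ x := by
        refine le_of_pow_le_pow_left₀ (n := 5) (by norm_num) hx0.le ?_
        rw [hxpow]; norm_num
      have hxhi : x ≤ (6989/10000 : ℝ) := by
        refine le_of_pow_le_pow_left₀ (n := 5) (by norm_num) (by norm_num) ?_
        rw [hxpow]; norm_num
      have hτ0 : (0:ℝ) < τ := by rw [hτ]; push_cast; nlinarith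
      have hτlo : (3011/10000 : ℝ) ≤ τ := by rw [hτ]; push_cast; nlinarith
      have hτhi : τ ≤ (753/2500 : ℝ) := by rw [hτ]; push_cast; nlinarith
      have hlog : (1197/1000 : ℝ) ≤ Real.log (1/τ) := by
        refine log_ge τ (1197/1000 : ℝ) 300 (by norm_num) hτ0 (by norm_num) (by norm_num) ?_
        refine le_trans hτhi ?_
        rw [show (300:ℕ) = 3*100 by rfl, pow_mul]; norm_num
      refine le_min ?_ (le_trans ?_ (le_max_right _ _))
      · rw [h1τ]; push_cast; nlinarith
      · have h1 : (3011/10000 : ℝ) * (1197/1000 : ℝ) ≤ τ * Real.log (1/τ) :=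
          mul_le_mul hτlo hlog (by norm_num) hτ0.le
        have h2 : (3011/10000 : ℝ) * (3011/10000 : ℝ) ≤ τ * τ :=
          mul_le_mul hτlo hτlo (by norm_num) hτ0.le
        nlinarith [h1, h2, hτhi]
    · -- k = 6
      have hxlo : (723/1000 : ℝ) ≤ x := by
        refine le_of_pow_le_pow_left₀ (n := 6) (by norm_num) hx0.le ?_
        rw [hxpow]; norm_num
      have hxhi : x ≤ (7231/10000 : ℝ) := by
        refine le_of_pow_le_pow_left₀ (n := 6) (by norm_num) (by norm_num) ?_
        rw [hxpow]; norm_num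
      have hτ0 : (0:ℝ) < τ := by rw [hτ]; push_cast; nlinarith
      have hτlo : (2769/10000 : ℝ) ≤ τ := by rw [hτ]; push_cast; nlinarith
      have hτhi : τ ≤ (277/1000 : ℝ) := by rw [hτ]; push_cast; nlinarith
      have hlog : (32/25 : ℝ) ≤ Real.log (1/τ) := by
        refine log_ge τ (32/25 : ℝ) 300 (by norm_num) hτ0 (by norm_num) (by norm_num) ?_
        refine le_trans hτhi ?_
        rw [show (300:ℕ) = 3*100 by rfl, pow_mul]; norm_num
      refine le_min ?_ (le_trans ?_ (le_max_right _ _))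
      · rw [h1τ]; push_cast; nlinarith
      · have h1 : (2769/10000 : ℝ) * (32/25 : ℝ) ≤ τ * Real.log (1/τ) :=
          mul_le_mul hτlo hlog (by norm_num) hτ0.le
        have h2 : (2769/10000 : ℝ) * (2769/10000 : ℝ) ≤ τ * τ :=
          mul_le_mul hτlo hτlo (by norm_num) hτ0.le
        nlinarith [h1, h2, hτhi]
    · -- k = 7
      have hxlo : (7429/10000 : ℝ) ≤ x := by
        refine le_of_pow_le_pow_left₀ (n := 7) (by norm_num) hx0.le ?_
        rw [hxpow]; norm_num
      have hxhi : x ≤ (743/1000 : ℝ) := by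
        refine le_of_pow_le_pow_left₀ (n := 7) (by norm_num) (by norm_num) ?_
        rw [hxpow]; norm_num
      have hτ0 : (0:ℝ) < τ := by rw [hτ]; push_cast; nlinarith
      have hτlo : (257/1000 : ℝ) ≤ τ := by rw [hτ]; push_cast; nlinarith
      have hτhi : τ ≤ (2571/10000 : ℝ) := by rw [hτ]; push_cast; nlinarith
      have hlog : (271/200 : ℝ) ≤ Real.log (1/τ) := by
        refine log_ge τ (271/200 : ℝ) 300 (by norm_num) hτ0 (by norm_num) (by norm_num) ?_
        refine le_trans hτhi ?_
        rw [show (300:ℕ) = 3*100 by rfl, pow_mul]; norm_num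
      refine le_min ?_ (le_trans ?_ (le_max_right _ _))
      · rw [h1τ]; push_cast; nlinarith
      · have h1 : (257/1000 : ℝ) * (271/200 : ℝ) ≤ τ * Real.log (1/τ) :=
          mul_le_mul hτlo hlog (by norm_num) hτ0.le
        have h2 : (257/1000 : ℝ) * (257/1000 : ℝ) ≤ τ * τ :=
          mul_le_mul hτlo hτlo (by norm_num) hτ0.le
        nlinarith [h1, h2, hτhi]
    · -- k = 8
      have hxlo : (3799/5000 : ℝ) ≤ x := by
        refine le_of_pow_le_pow_left₀ (n := 8) (by norm_num) hx0.le ?_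
        rw [hxpow]; norm_num
      have hxhi : x ≤ (7599/10000 : ℝ) := by
        refine le_of_pow_le_pow_left₀ (n := 8) (by norm_num) (by norm_num) ?_
        rw [hxpow]; norm_num
      have hτ0 : (0:ℝ) < τ := by rw [hτ]; push_cast; nlinarith
      have hτlo : (2401/10000 : ℝ) ≤ τ := by rw [hτ]; push_cast; nlinarith
      have hτhi : τ ≤ (1201/5000 : ℝ) := by rw [hτ]; push_cast; nlinarith
      have hlog : (711/500 : ℝ) ≤ Real.log (1/τ) := by
        refine log_ge τ (711/500 : ℝ) 300 (by norm_num) hτ0 (by norm_num) (by norm_num) ?_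
        refine le_trans hτhi ?_
        rw [show (300:ℕ) = 3*100 by rfl, pow_mul]; norm_num
      refine le_min ?_ (le_trans ?_ (le_max_right _ _))
      · rw [h1τ]; push_cast; nlinarith
      · have h1 : (2401/10000 : ℝ) * (711/500 : ℝ) ≤ τ * Real.log (1/τ) :=
          mul_le_mul hτlo hlog (by norm_num) hτ0.le
        have h2 : (2401/10000 : ℝ) * (2401/10000 : ℝ) ≤ τ * τ :=
          mul_le_mul hτlo hτlo (by norm_num) hτ0.le
        nlinarith [h1, h2, hτhi]
    · -- k = 9
      have hxlo : (3871/5000 : ℝ) ≤ x := by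
        refine le_of_pow_le_pow_left₀ (n := 9) (by norm_num) hx0.le ?_
        rw [hxpow]; norm_num
      have hxhi : x ≤ (7743/10000 : ℝ) := by
        refine le_of_pow_le_pow_left₀ (n := 9) (by norm_num) (by norm_num) ?_
        rw [hxpow]; norm_num
      have hτ0 : (0:ℝ) < τ := by rw [hτ]; push_cast; nlinarith
      have hτlo : (2257/10000 : ℝ) ≤ τ := by rw [hτ]; push_cast; nlinarith
      have hτhi : τ ≤ (1129/5000 : ℝ) := by rw [hτ]; push_cast; nlinarith
      have hlog : (371/250 : ℝ) ≤ Real.log (1/τ) := by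
        refine log_ge τ (371/250 : ℝ) 300 (by norm_num) hτ0 (by norm_num) (by norm_num) ?_
        refine le_trans hτhi ?_
        rw [show (300:ℕ) = 3*100 by rfl, pow_mul]; norm_num
      refine le_min ?_ (le_trans ?_ (le_max_right _ _))
      · rw [h1τ]; push_cast; nlinarith
      · have h1 : (2257/10000 : ℝ) * (371/250 : ℝ) ≤ τ * Real.log (1/τ) :=
          mul_le_mul hτlo hlog (by norm_num) hτ0.le
        have h2 : (2257/10000 : ℝ) * (2257/10000 : ℝ) ≤ τ * τ :=
          mul_le_mul hτlo hτlo (by norm_num) hτ0.le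
        nlinarith [h1, h2, hτhi]
    · -- k = 10
      have hxlo : (7867/10000 : ℝ) ≤ x := by
        refine le_of_pow_le_pow_left₀ (n := 10) (by norm_num) hx0.le ?_
        rw [hxpow]; norm_num
      have hxhi : x ≤ (1967/2500 : ℝ) := by
        refine le_of_pow_le_pow_left₀ (n := 10) (by norm_num) (by norm_num) ?_
        rw [hxpow]; norm_num
      have hτ0 : (0:ℝ) < τ := by rw [hτ]; push_cast; nlinarith
      have hτlo : (533/2500 : ℝ) ≤ τ := by rw [hτ]; push_cast; nlinarith
      have hτhi : τ ≤ (2133/10000 : ℝ) := by rw [hτ]; push_cast; nlinarith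
      have hlog : (1541/1000 : ℝ) ≤ Real.log (1/τ) := by
        refine log_ge τ (1541/1000 : ℝ) 300 (by norm_num) hτ0 (by norm_num) (by norm_num) ?_
        refine le_trans hτhi ?_
        rw [show (300:ℕ) = 3*100 by rfl, pow_mul]; norm_num
      refine le_min ?_ (le_trans ?_ (le_max_right _ _))
      · rw [h1τ]; push_cast; nlinarith
      · have h1 : (533/2500 : ℝ) * (1541/1000 : ℝ) ≤ τ * Real.log (1/τ) :=
          mul_le_mul hτlo hlog (by norm_num) hτ0.le
        have h2 : (533/2500 : ℝ) * (533/2500 : ℝ) ≤ τ * τ :=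
          mul_le_mul hτlo hτlo (by norm_num) hτ0.le
        nlinarith [h1, h2, hτhi]
    · -- k = 11
      have hxlo : (7977/10000 : ℝ) ≤ x := by
        refine le_of_pow_le_pow_left₀ (n := 11) (by norm_num) hx0.le ?_
        rw [hxpow]; norm_num
      have hxhi : x ≤ (3989/5000 : ℝ) := by
        refine le_of_pow_le_pow_left₀ (n := 11) (by norm_num) (by norm_num) ?_
        rw [hxpow]; norm_num
      have hτ0 : (0:ℝ) < τ := by rw [hτ]; push_cast; nlinarith
      have hτlo : (1011/5000 : ℝ) ≤ τ := by rw [hτ]; push_cast; nlinarith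
      have hτhi : τ ≤ (2023/10000 : ℝ) := by rw [hτ]; push_cast; nlinarith
      have hlog : (1593/1000 : ℝ) ≤ Real.log (1/τ) := by
        refine log_ge τ (1593/1000 : ℝ) 300 (by norm_num) hτ0 (by norm_num) (by norm_num) ?_
        refine le_trans hτhi ?_
        rw [show (300:ℕ) = 3*100 by rfl, pow_mul]; norm_num
      refine le_min ?_ (le_trans ?_ (le_max_right _ _))
      · rw [h1τ]; push_cast; nlinarith
      · have h1 : (1011/5000 : ℝ) * (1593/1000 : ℝ) ≤ τ * Real.log (1/τ) :=
          mul_le_mul hτlo hlog (by norm_num) hτ0.le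
        have h2 : (1011/5000 : ℝ) * (1011/5000 : ℝ) ≤ τ * τ :=
          mul_le_mul hτlo hτlo (by norm_num) hτ0.le
        nlinarith [h1, h2, hτhi]
end

section
/- For any real τ with 0 < τ < 1, (1/2)·τ·(1-τ)² + τ·ln(1/τ) evaluated at τ = 0.359 is at least 0.441, which is strictly greater than 1/e. -/
theorem stmt_17 :
    ((1/2) * (0.359:ℝ) * (1 - 0.359)^2 + 0.359 * Real.log (1/0.359) ≥ 0.441) ∧
    (0.441:ℝ) > 1/Real.exp 1 := by
  have he : Real.exp 1 < 2.7182818286 := Real.exp_one_lt_d9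
  have he' : Real.exp 1 > 2.7182818283 := Real.exp_one_gt_d9
  constructor
  · have h1 : Real.log (Real.exp 1 / (1/0.359)) ≤ Real.exp 1 / (1/0.359) - 1 :=
      Real.log_le_sub_one_of_pos (by positivity)
    rw [Real.log_div (Real.exp_ne_zero 1) (by norm_num), Real.log_exp] at h1
    nlinarith [h1, he]
  · have h2 : Real.exp 1 > 0 := Real.exp_pos 1
    rw [gt_iff_lt, div_lt_iff₀ h2]
    nlinarith
end
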